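/- Every Rauzy class of irreducible permutations of {1,…,d} contains a standard permutation, i.e. a permutation π with π(1) = d and π(d) = 1. -/

import Mathlib

/-- `σ` is obtained from `π` by the bottom Rauzy move (0-indexed). -/
def RauzyBottomRel (d : ℕ) (π σ : Equiv.Perm (Fin d)) : Prop :=
  ∀ h : 0 < d, ∀ j : Fin d, (σ j).val =
    if (π j).val ≤ (π ⟨d - 1, by omega⟩).val then (π j).val
    else if (π j).val < d - 1 then (π j).val + 1
    else (π ⟨d - 1, by omega⟩).val + 1

/-- `σ` is obtained from `π` by the top Rauzy move (0-indexed). -/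
def RauzyTopRel (d : ℕ) (π σ : Equiv.Perm (Fin d)) : Prop :=
  ∀ h : 0 < d, ∀ j : Fin d,
    (j.val ≤ (π.symm ⟨d - 1, by omega⟩).val → σ j = π j) ∧
    (j.val = (π.symm ⟨d - 1, by omega⟩).val + 1 → σ j = π ⟨d - 1, by omega⟩) ∧
    ((π.symm ⟨d - 1, by omega⟩).val + 1 < j.val →
      σ j = π ⟨j.val - 1, lt_of_le_of_lt (Nat.sub_le _ _) j.isLt⟩)

namespace Rauzy

def fF (d c x : ℕ) : ℕ := if x ≤ c then x else if x + 1 < d then x + 1 else c + 1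
def fG (d c y : ℕ) : ℕ := if y ≤ c then y else if y = c + 1 then d - 1 else y - 1

lemma fF_lt {d c x : ℕ} (hc : c < d) (hx : x < d) : fF d c x < d := by
  unfold fF; split_ifs <;> omega
lemma fG_lt {d c y : ℕ} (hc : c < d) (hy : y < d) : fG d c y < d := by
  unfold fG; split_ifs <;> omega

variable {d : ℕ}

def fcyc (c : Fin d) : Equiv.Perm (Fin d) where
  toFun x := ⟨fF d c.val x.val, fF_lt c.isLt x.isLt⟩
  invFun y := ⟨fG d c.val y.val, fG_lt c.isLt y.isLt⟩
  left_inv x := by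
    have h1 := c.isLt; have h2 := x.isLt
    apply Fin.ext; simp only [fF, fG]; split_ifs <;> omega
  right_inv y := by
    have h1 := c.isLt; have h2 := y.isLt
    apply Fin.ext; simp only [fF, fG]; split_ifs <;> omega

def lastF (d : ℕ) (hd : 0 < d) : Fin d := ⟨d - 1, by omega⟩

def rbM (hd : 0 < d) (π : Equiv.Perm (Fin d)) : Equiv.Perm (Fin d) :=
  π.trans (fcyc (π (lastF d hd)))

def rtM (hd : 0 < d) (π : Equiv.Perm (Fin d)) : Equiv.Perm (Fin d) :=
  (fcyc (π.symm (lastF d hd))).symm.trans π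

lemma rb_val (hd : 0 < d) (π : Equiv.Perm (Fin d)) (j : Fin d) :
    ((rbM hd π) j).val = fF d ((π (lastF d hd)).val) ((π j).val) := rfl

lemma rt_eq (hd : 0 < d) (π : Equiv.Perm (Fin d)) (j : Fin d) :
    (rtM hd π) j = π ⟨fG d ((π.symm (lastF d hd)).val) j.val,
      fG_lt (π.symm (lastF d hd)).isLt j.isLt⟩ := rfl

lemma rbRel (hd : 0 < d) (π : Equiv.Perm (Fin d)) : RauzyBottomRel d π (rbM hd π) := by
  intro h j
  rw [rb_val hd π j]
  rw [show (⟨d - 1, by omega⟩ : Fin d) = lastF d hd from rfl]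
  have h1 := (π (lastF d hd)).isLt
  have h2 := (π j).isLt
  unfold fF
  split_ifs <;> omega

lemma rtRel (hd : 0 < d) (π : Equiv.Perm (Fin d)) : RauzyTopRel d π (rtM hd π) := by
  intro h j
  rw [show (⟨d - 1, by omega⟩ : Fin d) = lastF d hd from rfl]
  have hp := (π.symm (lastF d hd)).isLt
  have hj := j.isLt
  refine ⟨fun hle => ?_, fun heq => ?_, fun hgt => ?_⟩
  · rw [rt_eq hd π j]
    congr 1
    apply Fin.ext
    simp only [fG]
    split_ifs <;> omega
  · rw [rt_eq hd π j]
    congr 1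
    apply Fin.ext
    show fG d _ _ = d - 1
    simp only [fG]
    split_ifs <;> omega
  · rw [rt_eq hd π j]
    congr 1
    apply Fin.ext
    show fG d _ _ = j.val - 1
    simp only [fG]
    split_ifs <;> omega

lemma rb_unique (hd : 0 < d) {π σ : Equiv.Perm (Fin d)}
    (h : RauzyBottomRel d π σ) : σ = rbM hd π := by
  apply Equiv.ext
  intro j
  apply Fin.ext
  rw [h hd j, rbRel hd π hd j]

lemma rt_unique (hd : 0 < d) {π σ : Equiv.Perm (Fin d)}
    (h : RauzyTopRel d π σ) : σ = rtM hd π := by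
  apply Equiv.ext
  intro j
  obtain ⟨A, B, C⟩ := h hd j
  obtain ⟨A', B', C'⟩ := rtRel hd π hd j
  rcases Nat.lt_trichotomy j.val ((π.symm ⟨d - 1, by omega⟩).val + 1) with hc | hc | hc
  · rw [A (by omega), A' (by omega)]
  · rw [B hc, B' hc]
  · rw [C hc, C' hc]


def Step (d : ℕ) (ρ ρ' : Equiv.Perm (Fin d)) : Prop :=
  RauzyBottomRel d ρ ρ' ∨ RauzyTopRel d ρ ρ'

def Reach (d : ℕ) (π σ : Equiv.Perm (Fin d)) : Prop :=
  Relation.ReflTransGen (Step d) π σ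

lemma reach_rb (hd : 0 < d) (π : Equiv.Perm (Fin d)) : Reach d π (rbM hd π) :=
  Relation.ReflTransGen.single (Or.inl (rbRel hd π))

lemma reach_rt (hd : 0 < d) (π : Equiv.Perm (Fin d)) : Reach d π (rtM hd π) :=
  Relation.ReflTransGen.single (Or.inr (rtRel hd π))

lemma reach_ind (hd : 0 < d) (π : Equiv.Perm (Fin d)) (P : Equiv.Perm (Fin d) → Prop)
    (h0 : P π)
    (hb : ∀ τ, Reach d π τ → P τ → P (rbM hd τ))
    (ht : ∀ τ, Reach d π τ → P τ → P (rtM hd τ)) :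
    ∀ τ, Reach d π τ → P τ := by
  intro τ h
  induction h with
  | refl => exact h0
  | tail hab step ih =>
      rcases step with hB | hT
      · rw [rb_unique hd hB]; exact hb _ hab ih
      · rw [rt_unique hd hT]; exact ht _ hab ih

def Irr (d : ℕ) (π : Equiv.Perm (Fin d)) : Prop :=
  ∀ k, 1 ≤ k → k < d → ∃ i : Fin d, i.val < k ∧ k ≤ (π i).val

lemma perm_symm_lt (π : Equiv.Perm (Fin d)) (k : ℕ)
    (H : ∀ i : Fin d, i.val < k → (π i).val < k) :
    ∀ j : Fin d, j.val < k → (π.symm j).val < k := by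
  classical
  set A : Finset (Fin d) := Finset.univ.filter (fun i => i.val < k) with hA
  have himg : A.image π ⊆ A := by
    intro x hx
    simp only [Finset.mem_image] at hx
    obtain ⟨i, hi, rfl⟩ := hx
    simp only [hA, Finset.mem_filter, Finset.mem_univ, true_and] at *
    exact H i hi
  have hcard : A.card ≤ (A.image π).card := by
    rw [Finset.card_image_of_injective _ π.injective]
  have heq : A.image π = A := Finset.eq_of_subset_of_card_le himg hcard
  intro j hj
  have hjA : j ∈ A := by simp [hA, hj]
  rw [← heq] at hjA
  simp only [Finset.mem_image] at hjA
  obtain ⟨i, hi, hij⟩ := hjA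
  have hsj : π.symm j = i := by rw [← hij]; exact π.symm_apply_apply i
  rw [hsj]
  simp only [hA, Finset.mem_filter] at hi
  exact hi.2

lemma irr_symm {π : Equiv.Perm (Fin d)} (h : Irr d π) : Irr d π.symm := by
  intro k hk1 hkd
  by_contra hc
  push_neg at hc
  obtain ⟨i, hi, hik⟩ := h k hk1 hkd
  have := perm_symm_lt π.symm k hc
  simp only [Equiv.symm_symm] at this
  exact absurd (this i hi) (by omega)

lemma irr_rb (hd : 0 < d) {π : Equiv.Perm (Fin d)} (h : Irr d π) : Irr d (rbM hd π) := by
  intro k hk1 hkd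
  by_contra hc
  push_neg at hc
  set c := (π (lastF d hd)).val with hcdef
  -- step 1 : k ≤ c
  have hck : k ≤ c := by
    by_contra hck
    push_neg at hck
    have h1 : ((rbM hd π) (lastF d hd)).val = c := by
      rw [rb_val]; unfold fF; simp [hcdef]
    have h2 := perm_symm_lt (rbM hd π) k hc
    have h3 : ((rbM hd π).symm ⟨c, by omega⟩).val < k := by
      apply h2; exact hck
    have h4 : (rbM hd π).symm ⟨c, by omega⟩ = lastF d hd := by
      apply (rbM hd π).injective
      simp only [Equiv.apply_symm_apply]
      apply Fin.ext
      exact h1.symm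
    rw [h4] at h3
    simp only [lastF] at h3
    omega
  -- step 2 : π reducible at k
  obtain ⟨i, hik, hik2⟩ := h k hk1 hkd
  have h5 := hc i hik
  rw [rb_val] at h5
  have h6 := (π i).isLt
  unfold fF at h5
  split_ifs at h5 <;> omega

lemma rt_symm_eq (hd : 0 < d) (π : Equiv.Perm (Fin d)) :
    rtM hd π = (rbM hd π.symm).symm := by
  apply Equiv.ext
  intro j
  simp [rtM, rbM]

lemma irr_rt (hd : 0 < d) {π : Equiv.Perm (Fin d)} (h : Irr d π) : Irr d (rtM hd π) := by
  rw [rt_symm_eq hd π]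
  exact irr_symm (irr_rb hd (irr_symm h))

lemma irr_reach (hd : 0 < d) {π σ : Equiv.Perm (Fin d)} (hr : Reach d π σ) (h : Irr d π) :
    Irr d σ :=
  reach_ind hd π (Irr d) h (fun _ _ hp => irr_rb hd hp) (fun _ _ hp => irr_rt hd hp) σ hr


lemma nat_max (P : ℕ → Prop) (b : ℕ) (hb : ∀ n, P n → n ≤ b) (h : ∃ n, P n) :
    ∃ m, P m ∧ ∀ n, P n → n ≤ m := by
  induction b with
  | zero => obtain ⟨n, hn⟩ := h; exact ⟨n, hn, fun k hk => by have := hb k hk; omega⟩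
  | succ b ih =>
      by_cases hP : P (b + 1)
      · exact ⟨b + 1, hP, hb⟩
      · refine ih (fun n hn => ?_)
        have h1 := hb n hn
        rcases Nat.lt_or_ge n (b + 1) with h' | h'
        · omega
        · exfalso; have hn1 : n = b + 1 := by omega
          exact hP (hn1 ▸ hn)

lemma nat_min (P : ℕ → Prop) (h : ∃ n, P n) :
    ∃ m, P m ∧ ∀ n, P n → m ≤ n := by
  obtain ⟨n, hn⟩ := h
  induction n using Nat.strong_induction_on with
  | _ n ih =>
    by_cases h' : ∃ k, k < n ∧ P k
    · obtain ⟨k, hk, hPk⟩ := h'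
      exact ih k hk hPk
    · push_neg at h'
      exact ⟨n, hn, fun k hk => not_lt.1 fun hlt => h' k hlt hk⟩

lemma c_rb (hd : 0 < d) (π : Equiv.Perm (Fin d)) :
    (rbM hd π) (lastF d hd) = π (lastF d hd) := by
  apply Fin.ext
  rw [rb_val]; unfold fF; simp

lemma rb_small (hd : 0 < d) (π : Equiv.Perm (Fin d)) (j : Fin d)
    (h : (π j).val ≤ (π (lastF d hd)).val) : (rbM hd π) j = π j := by
  apply Fin.ext
  rw [rb_val]; unfold fF; simp [h]

lemma rt_low (hd : 0 < d) (π : Equiv.Perm (Fin d)) (j : Fin d)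
    (h : j.val ≤ (π.symm (lastF d hd)).val) : (rtM hd π) j = π j := by
  rw [rt_eq]
  congr 1
  apply Fin.ext
  show fG d _ _ = j.val
  unfold fG; simp [h]

lemma p_rt (hd : 0 < d) (π : Equiv.Perm (Fin d)) :
    ((rtM hd π).symm (lastF d hd)) = π.symm (lastF d hd) := by
  have h1 : (rtM hd π) (π.symm (lastF d hd)) = lastF d hd := by
    rw [rt_low hd π _ (le_refl _)]
    exact π.apply_symm_apply _
  apply (rtM hd π).injective
  rw [Equiv.apply_symm_apply]
  exact h1.symm

lemma rt_shift (hd : 0 < d) (π : Equiv.Perm (Fin d)) (j : Fin d)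
    (hgt : (π.symm (lastF d hd)).val < j.val) (hlt : j.val + 1 < d) :
    (rtM hd π) ⟨j.val + 1, hlt⟩ = π j := by
  rw [rt_eq]
  congr 1
  apply Fin.ext
  show fG d ((π.symm (lastF d hd)).val) (j.val + 1) = j.val
  unfold fG
  split_ifs <;> omega

lemma card_filter_val_lt (k : ℕ) (hk : k ≤ d) :
    (Finset.univ.filter (fun i : Fin d => i.val < k)).card = k := by
  classical
  have h2 : (Finset.univ.filter (fun i : Fin d => i.val < k)).card = (Finset.range k).card := by
    apply Finset.card_bij (fun (a : Fin d) _ => a.val)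
    · intro a ha
      simp only [Finset.mem_filter, Finset.mem_univ, true_and] at ha
      simp [Finset.mem_range, ha]
    · intro a _ b _ h
      exact Fin.ext h
    · intro b hb
      simp only [Finset.mem_range] at hb
      exact ⟨⟨b, by omega⟩, by simp [hb], rfl⟩
  rw [h2, Finset.card_range]


lemma phase2 (hd2 : 2 ≤ d) (hd : 0 < d) :
    ∀ n : ℕ, ∀ σ : Equiv.Perm (Fin d),
    (σ ⟨0, hd⟩).val = d - 1 → d - 1 - (σ.symm ⟨0, hd⟩).val ≤ n →
    ∃ τ, Reach d σ τ ∧ (τ ⟨0, hd⟩).val = d - 1 ∧ (τ (lastF d hd)).val = 0 := by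
  have base : ∀ σ : Equiv.Perm (Fin d), (σ ⟨0, hd⟩).val = d - 1 →
      (σ.symm ⟨0, hd⟩).val = d - 1 →
      ∃ τ, Reach d σ τ ∧ (τ ⟨0, hd⟩).val = d - 1 ∧ (τ (lastF d hd)).val = 0 := by
    intro σ h1 hq
    refine ⟨σ, Relation.ReflTransGen.refl, h1, ?_⟩
    have h3 : σ.symm ⟨0, hd⟩ = lastF d hd := Fin.ext hq
    rw [← h3, Equiv.apply_symm_apply]
  intro n
  induction n with
  | zero =>
      intro σ h1 h2
      exact base σ h1 (by have := (σ.symm ⟨0, hd⟩).isLt; omega)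
  | succ n ih =>
      intro σ h1 h2
      by_cases hq : (σ.symm ⟨0, hd⟩).val = d - 1
      · exact base σ h1 hq
      · have hqlt : (σ.symm ⟨0, hd⟩).val < d - 1 := by
          have := (σ.symm ⟨0, hd⟩).isLt; omega
        have hz : σ ⟨0, hd⟩ = lastF d hd := Fin.ext (by simpa [lastF] using h1)
        have hsymL : σ.symm (lastF d hd) = ⟨0, hd⟩ := by
          rw [← hz, Equiv.symm_apply_apply]
        have hq1 : 1 ≤ (σ.symm ⟨0, hd⟩).val := by
          rcases Nat.eq_zero_or_pos (σ.symm ⟨0, hd⟩).val with h0 | h0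
          · exfalso
            have h4 : σ.symm ⟨0, hd⟩ = ⟨0, hd⟩ := Fin.ext h0
            have h5 := congrArg σ h4
            rw [Equiv.apply_symm_apply] at h5
            have h6 : d - 1 = 0 := by rw [← h5] at h1; simpa using h1.symm
            omega
          · exact h0
        have hfirst : ((rtM hd σ) ⟨0, hd⟩).val = d - 1 := by
          rw [rt_low hd σ _ (Nat.zero_le _)]; exact h1
        have hlt2 : (σ.symm ⟨0, hd⟩).val + 1 < d := by omega
        have hstep : (rtM hd σ) ⟨(σ.symm ⟨0, hd⟩).val + 1, hlt2⟩ = ⟨0, hd⟩ := by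
          rw [rt_shift hd σ (σ.symm ⟨0, hd⟩) (by rw [hsymL]; exact hq1) hlt2]
          exact σ.apply_symm_apply _
        have hsym2 : ((rtM hd σ).symm ⟨0, hd⟩).val = (σ.symm ⟨0, hd⟩).val + 1 := by
          have h7 : (rtM hd σ).symm ⟨0, hd⟩ = ⟨(σ.symm ⟨0, hd⟩).val + 1, hlt2⟩ := by
            apply (rtM hd σ).injective
            rw [Equiv.apply_symm_apply, hstep]
          rw [h7]
        have hm : d - 1 - ((rtM hd σ).symm ⟨0, hd⟩).val ≤ n := by
          rw [hsym2]; omega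
        obtain ⟨τ, hr, hτ1, hτ2⟩ := ih (rtM hd σ) hfirst hm
        exact ⟨τ, (reach_rt hd σ).trans hr, hτ1, hτ2⟩


lemma S3aux (hd : 0 < d) (τ0 : Equiv.Perm (Fin d)) (cm : ℕ)
    (hcmin : ∀ τ, Reach d τ0 τ → cm ≤ (τ (lastF d hd)).val) :
    ∀ n : ℕ, ∀ τ, Reach d τ0 τ → ∀ j : Fin d, (τ.symm (lastF d hd)).val < j.val →
      d - 1 - j.val ≤ n → cm ≤ (τ j).val := by
  intro n
  induction n with
  | zero =>
      intro τ hr j hj hm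
      have hjd : j.val = d - 1 := by have := j.isLt; omega
      have he : j = lastF d hd := Fin.ext hjd
      rw [he]; exact hcmin τ hr
  | succ n ih =>
      intro τ hr j hj hm
      by_cases hjd : j.val = d - 1
      · have he : j = lastF d hd := Fin.ext hjd
        rw [he]; exact hcmin τ hr
      · have hjlt : j.val + 1 < d := by have := j.isLt; omega
        have hshift := rt_shift hd τ j hj hjlt
        have hr' : Reach d τ0 (rtM hd τ) := hr.trans (reach_rt hd τ)
        have hres := ih (rtM hd τ) hr' ⟨j.val + 1, hjlt⟩
            (by rw [p_rt hd τ]; simpa using Nat.lt_succ_of_lt hj) (by simp; omega)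
        rw [hshift] at hres
        exact hres

lemma S6aux (hd : 0 < d) (τ0 : Equiv.Perm (Fin d)) (cm : ℕ) (t : Fin d) :
    ∀ n : ℕ, ∀ τ, Reach d τ0 τ → (τ (lastF d hd)).val = cm → cm < (τ t).val →
      d - 1 - (τ t).val ≤ n → ∃ τ', Reach d τ0 τ' ∧ (τ'.symm (lastF d hd)).val = t.val := by
  have base : ∀ τ, Reach d τ0 τ → (τ t).val = d - 1 →
      ∃ τ', Reach d τ0 τ' ∧ (τ'.symm (lastF d hd)).val = t.val := by
    intro τ hr htd
    refine ⟨τ, hr, ?_⟩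
    have he : τ t = lastF d hd := Fin.ext htd
    rw [← he, Equiv.symm_apply_apply]
  intro n
  induction n with
  | zero =>
      intro τ hr hc ht hm
      exact base τ hr (by have := (τ t).isLt; omega)
  | succ n ih =>
      intro τ hr hc ht hm
      by_cases htd : (τ t).val = d - 1
      · exact base τ hr htd
      · have hval : ((rbM hd τ) t).val = (τ t).val + 1 := by
          rw [rb_val]
          have h1 := (τ t).isLt
          unfold fF
          split_ifs <;> omega
        exact ih (rbM hd τ) (hr.trans (reach_rb hd τ))
          (by rw [c_rb]; exact hc) (by rw [hval]; omega) (by rw [hval]; omega)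


lemma phase1 (hd2 : 2 ≤ d) (hd : 0 < d) (π : Equiv.Perm (Fin d)) (hirr : Irr d π) :
    ∃ τ, Reach d π τ ∧ (τ ⟨0, hd⟩).val = d - 1 := by
  classical
  obtain ⟨m, hPm, hmax⟩ := nat_max (fun n => ∃ τ, Reach d π τ ∧ (τ ⟨0, hd⟩).val = n) (d - 1)
      (fun n hn => by obtain ⟨τ, _, h⟩ := hn; have := (τ ⟨0, hd⟩).isLt; omega)
      ⟨(π ⟨0, hd⟩).val, π, Relation.ReflTransGen.refl, rfl⟩
  obtain ⟨τ0, hr0, hm0⟩ := hPm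
  have hmax' : ∀ τ, Reach d π τ → (τ ⟨0, hd⟩).val ≤ m := fun τ h => hmax _ ⟨τ, h, rfl⟩
  by_cases hm : m = d - 1
  · exact ⟨τ0, hr0, hm ▸ hm0⟩
  exfalso
  have hmlt : m < d - 1 := by have := (τ0 ⟨0, hd⟩).isLt; omega
  have hirr0 : Irr d τ0 := irr_reach hd hr0 hirr
  -- S1 : first value constant m on reachable set
  have S1 : ∀ τ, Reach d τ0 τ → (τ ⟨0, hd⟩).val = m := by
    apply reach_ind hd τ0 (fun τ => (τ ⟨0, hd⟩).val = m) hm0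
    · intro τ hrt hP
      have hle := hmax' (rbM hd τ) ((hr0.trans hrt).trans (reach_rb hd τ))
      rw [rb_val] at hle ⊢
      rw [hP] at hle ⊢
      have := (τ (lastF d hd)).isLt
      unfold fF at hle ⊢
      split_ifs at hle ⊢ <;> omega
    · intro τ hrt hP
      rw [rt_low hd τ _ (Nat.zero_le _)]
      exact hP
  -- S2 : last value always > m
  have S2 : ∀ τ, Reach d τ0 τ → m < (τ (lastF d hd)).val := by
    intro τ hrt
    by_contra hcon
    push_neg at hcon
    rcases Nat.lt_or_ge (τ (lastF d hd)).val m with hlt | hge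
    · have hle := hmax' (rbM hd τ) ((hr0.trans hrt).trans (reach_rb hd τ))
      rw [rb_val] at hle
      rw [S1 τ hrt] at hle
      unfold fF at hle
      split_ifs at hle <;> omega
    · have hceq : (τ (lastF d hd)).val = m := by omega
      have he : τ (lastF d hd) = τ ⟨0, hd⟩ := Fin.ext (by rw [hceq, S1 τ hrt])
      have h2 := τ.injective he
      have h3 : d - 1 = 0 := congrArg Fin.val h2
      omega
  -- minimal last value cm
  obtain ⟨cm, hQcm, hcmin⟩ := nat_min (fun n => ∃ τ, Reach d τ0 τ ∧ (τ (lastF d hd)).val = n)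
      ⟨(τ0 (lastF d hd)).val, τ0, Relation.ReflTransGen.refl, rfl⟩
  obtain ⟨τ1, hr1, hc1⟩ := hQcm
  have hcmin' : ∀ τ, Reach d τ0 τ → cm ≤ (τ (lastF d hd)).val := fun τ h => hcmin _ ⟨τ, h, rfl⟩
  have hmcm : m < cm := hc1 ▸ S2 τ1 hr1
  have hcmd : cm < d := hc1 ▸ (τ1 (lastF d hd)).isLt
  have S3 : ∀ τ, Reach d τ0 τ → ∀ j : Fin d, (τ.symm (lastF d hd)).val < j.val →
      cm ≤ (τ j).val :=
    fun τ hr j hj => S3aux hd τ0 cm hcmin' (d - 1) τ hr j hj (by omega)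
  -- S4 : positions with small τ0-value are frozen
  have S4 : ∀ τ, Reach d τ0 τ → ∀ j : Fin d, (τ0 j).val < cm → τ j = τ0 j := by
    apply reach_ind hd τ0 (fun τ => ∀ j, (τ0 j).val < cm → τ j = τ0 j) (fun j _ => rfl)
    · intro τ hrt hP j hj
      have h1 := hP j hj
      have h2 : (τ j).val ≤ (τ (lastF d hd)).val := by
        rw [h1]; have := hcmin' τ hrt; omega
      rw [rb_small hd τ j h2]; exact h1
    · intro τ hrt hP j hj
      have h1 := hP j hj
      have hjp : j.val ≤ (τ.symm (lastF d hd)).val := by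
        by_contra hc2; push_neg at hc2
        have h3 := S3 τ hrt j hc2
        rw [h1] at h3; omega
      rw [rt_low hd τ j hjp]; exact h1
  -- maximal small position s
  obtain ⟨s, hSs, hsmax⟩ := nat_max (fun n => ∃ j : Fin d, j.val = n ∧ (τ0 j).val < cm) (d - 1)
      (fun n hn => by obtain ⟨j, hj, _⟩ := hn; have := j.isLt; omega)
      ⟨(τ0.symm ⟨0, hd⟩).val, τ0.symm ⟨0, hd⟩, rfl, by
        rw [Equiv.apply_symm_apply]; show (0 : ℕ) < cm; omega⟩
  obtain ⟨js, hjs_val, hjs_small⟩ := hSs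
  have hsmax' : ∀ j : Fin d, (τ0 j).val < cm → j.val ≤ s := fun j hj => hsmax _ ⟨j, rfl, hj⟩
  have hsd : s < d := by have := js.isLt; omega
  -- S5 : last symbol position always beyond s
  have S5 : ∀ τ, Reach d τ0 τ → s < (τ.symm (lastF d hd)).val := by
    intro τ hrt
    by_contra hcon
    push_neg at hcon
    have h1 : τ js = τ0 js := S4 τ hrt js hjs_small
    have h2 : js.val ≤ (τ.symm (lastF d hd)).val := by
      by_contra hc2; push_neg at hc2
      have h3 := S3 τ hrt js hc2
      rw [h1] at h3; omega
    have h3 : (τ.symm (lastF d hd)).val = js.val := by omega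
    have h4 : τ.symm (lastF d hd) = js := Fin.ext h3
    have h5 : τ js = lastF d hd := by rw [← h4, Equiv.apply_symm_apply]
    rw [h1] at h5
    have h6 : (τ0 js).val = d - 1 := congrArg Fin.val h5
    omega
  -- counting
  set A : Finset (Fin d) := Finset.univ.filter (fun v => v.val < cm) with hA
  set B : Finset (Fin d) := Finset.univ.filter (fun j => j.val ≤ s) with hB
  have hcardA : A.card = cm := card_filter_val_lt cm (by omega)
  have hcardB : B.card = s + 1 := by
    have he : B = Finset.univ.filter (fun j : Fin d => j.val < s + 1) := by
      ext x; simp [hB, Nat.lt_succ_iff]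
    rw [he]
    exact card_filter_val_lt (s + 1) (by omega)
  have himg : A.image τ0.symm ⊆ B := by
    intro x hx
    simp only [Finset.mem_image] at hx
    obtain ⟨v, hv, rfl⟩ := hx
    simp only [hA, Finset.mem_filter, Finset.mem_univ, true_and] at hv
    simp only [hB, Finset.mem_filter, Finset.mem_univ, true_and]
    apply hsmax'
    rw [Equiv.apply_symm_apply]; exact hv
  have hcardimg : (A.image τ0.symm).card = cm := by
    rw [Finset.card_image_of_injective _ τ0.symm.injective, hcardA]
  rcases Nat.lt_or_ge s cm with hcase | hcase
  · -- Case A : s < cm, τ0 is reducible at s+1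
    have heq : A.image τ0.symm = B :=
      Finset.eq_of_subset_of_card_le himg (by rw [hcardimg, hcardB]; omega)
    obtain ⟨i, hik, hik2⟩ := hirr0 (s + 1) (by omega) (by omega)
    have hiB : i ∈ B := by
      simp only [hB, Finset.mem_filter, Finset.mem_univ, true_and]; omega
    rw [← heq] at hiB
    simp only [Finset.mem_image] at hiB
    obtain ⟨v, hv, hvi⟩ := hiB
    simp only [hA, Finset.mem_filter, Finset.mem_univ, true_and] at hv
    have h7 : τ0 i = v := by rw [← hvi, Equiv.apply_symm_apply]
    rw [h7] at hik2
    have h9 : cm ≤ s + 1 := by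
      rw [← hcardimg, ← hcardB]
      exact Finset.card_le_card himg
    omega
  · -- Case B : cm ≤ s
    have hlt : (A.image τ0.symm).card < B.card := by rw [hcardimg, hcardB]; omega
    have hex : ∃ t ∈ B, t ∉ A.image τ0.symm := by
      by_contra hcc; push_neg at hcc
      have hsub : B ⊆ A.image τ0.symm := fun x hx => hcc x hx
      have := Finset.card_le_card hsub
      omega
    obtain ⟨t, htB, htn⟩ := hex
    have hts : t.val ≤ s := by
      simpa only [hB, Finset.mem_filter, Finset.mem_univ, true_and] using htB
    have ht0 : cm ≤ (τ0 t).val := by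
      by_contra hc2; push_neg at hc2
      apply htn
      simp only [Finset.mem_image]
      refine ⟨τ0 t, ?_, τ0.symm_apply_apply t⟩
      simp only [hA, Finset.mem_filter, Finset.mem_univ, true_and]
      exact hc2
    have ht1 : cm ≤ (τ1 t).val := by
      by_contra hc2; push_neg at hc2
      have h1 : τ1 (τ0.symm (τ1 t)) = τ0 (τ0.symm (τ1 t)) :=
        S4 τ1 hr1 _ (by rw [Equiv.apply_symm_apply]; exact hc2)
      rw [Equiv.apply_symm_apply] at h1
      have h2 : τ0.symm (τ1 t) = t := τ1.injective h1
      have h3 : τ0 t = τ1 t := by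
        have h4 := congrArg τ0 h2
        rw [Equiv.apply_symm_apply] at h4
        exact h4.symm
      rw [h3] at ht0
      omega
    have htne : (τ1 t).val ≠ cm := by
      intro he
      have h1 : τ1 t = τ1 (lastF d hd) := Fin.ext (by rw [he, hc1])
      have h2 := τ1.injective h1
      have h3 : t.val = d - 1 := congrArg Fin.val h2
      have h5 := S5 τ1 hr1
      have h6 := (τ1.symm (lastF d hd)).isLt
      omega
    obtain ⟨τ', hr', hp'⟩ := S6aux hd τ0 cm t (d - 1) τ1 hr1 hc1 (by omega) (by omega)
    have h8 := S5 τ' hr'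
    omega

end Rauzy

/-- Every Rauzy class contains a standard permutation: from any irreducible
`π` some finite sequence of Rauzy moves reaches a permutation `σ` with
`σ(1) = d` and `σ(d) = 1` (0-indexed: `σ 0 = d-1`, `σ (d-1) = 0`). -/
theorem rauzy_class_contains_standard (d : ℕ) (hd : 2 ≤ d) (π : Equiv.Perm (Fin d))
    (hirr : ∀ k : ℕ, 1 ≤ k → k < d → ¬ (∀ i : Fin d, i.val < k → (π i).val < k)) :
    ∃ σ : Equiv.Perm (Fin d),
      Relation.ReflTransGen
        (fun ρ ρ' => RauzyBottomRel d ρ ρ' ∨ RauzyTopRel d ρ ρ') π σ ∧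
      σ ⟨0, by omega⟩ = ⟨d - 1, by omega⟩ ∧ σ ⟨d - 1, by omega⟩ = ⟨0, by omega⟩ := by
  have hd0 : 0 < d := by omega
  have hIrr : Rauzy.Irr d π := by
    intro k hk1 hkd
    have h1 := hirr k hk1 hkd
    push_neg at h1
    obtain ⟨i, hi, hi2⟩ := h1
    exact ⟨i, hi, by omega⟩
  obtain ⟨τ, hr1, hτ⟩ := Rauzy.phase1 hd hd0 π hIrr
  obtain ⟨σ, hr2, h1, h2⟩ := Rauzy.phase2 hd hd0 (d - 1) τ hτ (by omega)
  refine ⟨σ, Relation.ReflTransGen.trans hr1 hr2, Fin.ext h1, Fin.ext h2⟩
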